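/- For integers 1 ≤ r ≤ s and n ≥ 2s+1, define A^r_s(n) := |∑_{p=r}^{s} (-1)^p C(n-1-p, p) (C(n-1-2p, s-p) - C(n-1-2p, s-p-1))|. Then A^r_s(n) = ((n-2s)/s) · C(n-r, n-s) · C(n-s-1, r-1). -/

import Mathlib

lemma fac_ne (n : ℕ) : ((Nat.factorial n : ℚ)) ≠ 0 :=
  Nat.cast_ne_zero.mpr (Nat.factorial_ne_zero n)



lemma base_id (q m : ℕ) :
    ((q : ℚ) + 1) * ((m + q + 1).choose (q + 1) : ℚ)
      = ((m : ℚ) + 1) * ((m + q + 1).choose q : ℚ) := by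
  rw [Nat.cast_choose ℚ (by omega : q + 1 ≤ m + q + 1),
      Nat.cast_choose ℚ (by omega : q ≤ m + q + 1),
      show m + q + 1 - (q + 1) = m from by omega,
      show m + q + 1 - q = m + 1 from by omega,
      show m + 1 = m + 1 from rfl]
  rw [Nat.factorial_succ (q), Nat.factorial_succ (m)]
  have h1 := fac_ne q
  have h2 := fac_ne m
  push_cast
  field_simp

lemma step_id (q i m : ℕ) :
    ((q : ℚ) + (i : ℚ) + 2) * ((q + 2*i + m + 3).choose (q + 1) : ℚ) *
        (((m + 2*i + 2).choose (i + 1) : ℚ) - ((m + 2*i + 2).choose i : ℚ))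
      = ((m : ℚ) + 1) *
          (((q + 2*i + m + 4).choose (i + 1) : ℚ) * ((q + i + m + 2).choose q : ℚ)
            + ((q + 2*i + m + 3).choose i : ℚ) * ((q + i + m + 2).choose (q + 1) : ℚ)) := by
  rw [Nat.cast_choose ℚ (by omega : q + 1 ≤ q + 2*i + m + 3),
      Nat.cast_choose ℚ (by omega : i + 1 ≤ m + 2*i + 2),
      Nat.cast_choose ℚ (by omega : i ≤ m + 2*i + 2),
      Nat.cast_choose ℚ (by omega : i + 1 ≤ q + 2*i + m + 4),
      Nat.cast_choose ℚ (by omega : q ≤ q + i + m + 2),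
      Nat.cast_choose ℚ (by omega : i ≤ q + 2*i + m + 3),
      Nat.cast_choose ℚ (by omega : q + 1 ≤ q + i + m + 2)]
  rw [show q + 2*i + m + 3 - (q + 1) = m + 2*i + 2 from by omega,
      show m + 2*i + 2 - (i + 1) = m + i + 1 from by omega,
      show m + 2*i + 2 - i = (m + i + 1) + 1 from by omega,
      show q + 2*i + m + 4 - (i + 1) = (q + i + m + 2) + 1 from by omega,
      show q + i + m + 2 - q = (m + i + 1) + 1 from by omega,
      show q + 2*i + m + 3 - i = (q + i + m + 2) + 1 from by omega,
      show q + i + m + 2 - (q + 1) = m + i + 1 from by omega,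
      show q + 2*i + m + 4 = (q + 2*i + m + 3) + 1 from by omega]
  rw [Nat.factorial_succ (m + i + 1), Nat.factorial_succ (q + i + m + 2),
      Nat.factorial_succ (q + 2*i + m + 3), Nat.factorial_succ q, Nat.factorial_succ i]
  have h1 := fac_ne (q + 2*i + m + 3)
  have h2 := fac_ne (m + 2*i + 2)
  have h3 := fac_ne (m + i + 1)
  have h4 := fac_ne (q + i + m + 2)
  have h5 := fac_ne q
  have h6 := fac_ne i
  push_cast
  field_simp
  ring

lemma main_sum (m s : ℕ) : ∀ r, 1 ≤ r → r ≤ s →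
    ∑ p ∈ Finset.Icc r s,
        (-1 : ℚ) ^ p * ((2*s+1+m - 1 - p).choose p : ℚ) *
          (((2*s+1+m - 1 - 2 * p).choose (s - p) : ℚ) -
            if p = s then 0 else ((2*s+1+m - 1 - 2 * p).choose (s - p - 1) : ℚ))
      = (-1 : ℚ) ^ r * (((m : ℚ) + 1) / (s : ℚ)) *
          ((2*s+m+1-r).choose (s - r) : ℚ) * ((s + m).choose (r - 1) : ℚ) := by
  suffices H : ∀ d r, 1 ≤ r → r ≤ s → s - r = d →
      ∑ p ∈ Finset.Icc r s,
        (-1 : ℚ) ^ p * ((2*s+1+m - 1 - p).choose p : ℚ) *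
          (((2*s+1+m - 1 - 2 * p).choose (s - p) : ℚ) -
            if p = s then 0 else ((2*s+1+m - 1 - 2 * p).choose (s - p - 1) : ℚ))
      = (-1 : ℚ) ^ r * (((m : ℚ) + 1) / (s : ℚ)) *
          ((2*s+m+1-r).choose (s - r) : ℚ) * ((s + m).choose (r - 1) : ℚ) by
    exact fun r h1 h2 => H (s - r) r h1 h2 rfl
  intro d
  induction d with
  | zero =>
    intro r hr1 hrs hd
    have hrs' : r = s := by omega
    subst hrs'
    obtain ⟨q, rfl⟩ : ∃ q, r = q + 1 := ⟨r - 1, by omega⟩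
    rw [Finset.Icc_self, Finset.sum_singleton, if_pos rfl, sub_zero,
        show 2*(q+1)+1+m - 1 - (q+1) = m + q + 1 from by omega,
        show (q+1) - (q+1) = 0 from by omega,
        show (q+1) + m = m + q + 1 from by omega,
        show (q+1) - 1 = q from by omega,
        Nat.choose_zero_right, Nat.choose_zero_right, Nat.cast_one, mul_one, mul_one]
    have hb := base_id q m
    have hq : ((q:ℚ)+1) ≠ 0 := by positivity
    push_cast
    field_simp
    linear_combination hb
  | succ d ih =>
    intro r hr1 hrs hd
    have hins : Finset.Icc r s = insert r (Finset.Icc (r+1) s) := by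
      ext x; simp only [Finset.mem_Icc, Finset.mem_insert]; omega
    rw [hins, Finset.sum_insert (by simp only [Finset.mem_Icc]; omega),
        ih (r+1) (by omega) (by omega) (by omega)]
    obtain ⟨q, rfl⟩ : ∃ q, r = q + 1 := ⟨r - 1, by omega⟩
    have hs : s = q + d + 2 := by omega
    subst hs
    rw [if_neg (by omega)]
    rw [show 2*(q+d+2)+1+m - 1 - (q+1) = q + 2*d + m + 3 from by omega,
        show 2*(q+d+2)+1+m - 1 - 2*(q+1) = m + 2*d + 2 from by omega,
        show (q+d+2) - (q+1) = d + 1 from by omega,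
        show d + 1 - 1 = d from by omega,
        show 2*(q+d+2)+m+1-(q+1+1) = q + 2*d + m + 3 from by omega,
        show (q+d+2) - (q+1+1) = d from by omega,
        show q + 1 + 1 - 1 = q + 1 from by omega,
        show 2*(q+d+2)+m+1-(q+1) = q + 2*d + m + 4 from by omega,
        show q + 1 - 1 = q from by omega,
        show (q+d+2) + m = q + d + m + 2 from by omega]
    have hst := step_id q d m
    have hq : ((q:ℚ)+(d:ℚ)+2) ≠ 0 := by positivity
    push_cast
    field_simp
    linear_combination ((-1:ℚ))^(q+1) * hst

/-- For `1 ≤ r ≤ s` and `n ≥ 2s+1`, with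
`A^r_s(n) := |∑_{p=r}^{s} (-1)^p C(n-1-p,p) (C(n-1-2p,s-p) - C(n-1-2p,s-p-1))|`
(with `C(m,-1) = 0`), one has `A^r_s(n) = ((n-2s)/s) C(n-r,n-s) C(n-s-1,r-1)`. -/
theorem abs_alternating_sum_eq (r s n : ℕ) (hr : 1 ≤ r) (hrs : r ≤ s)
    (hn : 2 * s + 1 ≤ n) :
    |∑ p ∈ Finset.Icc r s,
        (-1 : ℚ) ^ p * ((n - 1 - p).choose p : ℚ) *
          (((n - 1 - 2 * p).choose (s - p) : ℚ) -
            if p = s then 0 else ((n - 1 - 2 * p).choose (s - p - 1) : ℚ))| =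
      ((n : ℚ) - 2 * (s : ℚ)) / (s : ℚ) * ((n - r).choose (n - s) : ℚ) *
        ((n - s - 1).choose (r - 1) : ℚ) := by
  obtain ⟨m, rfl⟩ : ∃ m, n = 2 * s + 1 + m := ⟨n - (2 * s + 1), by omega⟩
  rw [main_sum m s r hr hrs]
  rw [abs_mul, abs_mul, abs_mul, abs_pow, abs_neg, abs_one, one_pow, one_mul,
      abs_of_nonneg (by positivity : (0:ℚ) ≤ ((m : ℚ) + 1) / (s : ℚ)),
      abs_of_nonneg (by positivity : (0:ℚ) ≤ ((2*s+m+1-r).choose (s - r) : ℚ)),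
      abs_of_nonneg (by positivity : (0:ℚ) ≤ ((s + m).choose (r - 1) : ℚ))]
  rw [show 2*s+1+m - r = 2*s+m+1-r from by omega,
      show 2*s+1+m - s - 1 = s + m from by omega,
      show 2*s+1+m - s = (2*s+m+1-r) - (s - r) from by omega,
      Nat.choose_symm (by omega : s - r ≤ 2*s+m+1-r)]
  have : ((2*s+1+m : ℕ) : ℚ) - 2 * (s : ℚ) = (m : ℚ) + 1 := by push_cast; ring
  rw [this]
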